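/- Let N and N' be finitely generated submodules of a module M over a Noetherian ring such that every localization M_p at an associated prime p of M has a unique submodule of length one (i.e., the socle/finitistic part of M_p has length at most one). Then Ass(N ∩ N') = Ass(N) ∩ Ass(N'). -/

import Mathlib

open LocalizedModule in
lemma aux_simple {R M : Type*} [CommRing R] [AddCommGroup M] [Module R M]
    {p : Ideal R} (hp : p.IsPrime) {m : M} (hm : p = (Submodule.span R {m}).annihilator) :
    IsSimpleModule (Localization.AtPrime p)
      (LinearMap.range (LinearMap.toSpanSingleton (Localization.AtPrime p)
        (LocalizedModule p.primeCompl M) (mk m 1))) := by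
  set f := LinearMap.toSpanSingleton (Localization.AtPrime p)
      (LocalizedModule p.primeCompl M) (mk m 1)
  have hne : (mk m 1 : LocalizedModule p.primeCompl M) ≠ 0 := by
    intro h
    rw [show (0 : LocalizedModule p.primeCompl M) = mk 0 1 from (zero_mk 1).symm,
      mk_eq] at h
    obtain ⟨u, hu⟩ := h
    simp only [one_smul, smul_zero] at hu
    have : (u : R) • m = 0 := hu
    exact u.2 (hm ▸ (Submodule.mem_annihilator_span_singleton m (u : R)).2 this)
  have hker : LinearMap.ker f = IsLocalRing.maximalIdeal (Localization.AtPrime p) := by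
    apply le_antisymm
    · apply IsLocalRing.le_maximalIdeal
      intro h
      have : (1 : Localization.AtPrime p) ∈ LinearMap.ker f := h ▸ Submodule.mem_top
      rw [LinearMap.mem_ker, LinearMap.toSpanSingleton_apply, one_smul] at this
      exact hne this
    · rw [← Localization.AtPrime.map_eq_maximalIdeal, Ideal.map_le_iff_le_comap]
      intro a ha
      rw [Ideal.mem_comap, LinearMap.mem_ker, LinearMap.toSpanSingleton_apply,
        algebraMap_smul, smul'_mk]
      have : a • m = 0 := (Submodule.mem_annihilator_span_singleton m a).1 (hm ▸ ha)
      rw [this, zero_mk]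
  have hmax : Ideal.IsMaximal (LinearMap.ker f) := by
    rw [hker]; exact IsLocalRing.maximalIdeal.isMaximal _
  have : IsCoatom (LinearMap.ker f) := Ideal.isMaximal_def.1 hmax
  have hsimp : IsSimpleModule (Localization.AtPrime p)
      (Localization.AtPrime p ⧸ LinearMap.ker f) := isSimpleModule_iff_isCoatom.2 this
  exact IsSimpleModule.congr (LinearMap.quotKerEquivRange f).symm

lemma aux_ann {R M : Type*} [CommRing R] [AddCommGroup M] [Module R M]
    {P : Submodule R M} (x : P) :
    (Submodule.span R {x}).annihilator = (Submodule.span R {(x : M)}).annihilator := by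
  ext r
  rw [Submodule.mem_annihilator_span_singleton, Submodule.mem_annihilator_span_singleton]
  constructor
  · intro h; have := congrArg (Subtype.val) h; simpa using this
  · intro h; ext; simpa using h

/-- In a binary module (each localization at an associated prime has a unique
simple submodule, i.e. a unique submodule of length one), the associated primes of
an intersection of two submodules are the common associated primes. -/
theorem stmt_8 {R M : Type*} [CommRing R] [IsNoetherianRing R]
    [AddCommGroup M] [Module R M] [Module.Finite R M]
    (hbin : ∀ (p : Ideal R) (hp : p.IsPrime), p ∈ associatedPrimes R M →
      ∃! H : Submodule (Localization.AtPrime p) (LocalizedModule p.primeCompl M),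
        IsSimpleModule (Localization.AtPrime p) H)
    (N N' : Submodule R M) :
    associatedPrimes R (N ⊓ N' : Submodule R M) =
      associatedPrimes R N ∩ associatedPrimes R N' := by
  ext p
  constructor
  · intro h
    exact ⟨associatedPrimes.subset_of_injective
        (Submodule.inclusion_injective (inf_le_left : N ⊓ N' ≤ N)) h,
      associatedPrimes.subset_of_injective
        (Submodule.inclusion_injective (inf_le_right : N ⊓ N' ≤ N')) h⟩
  · rintro ⟨h1, h2⟩
    rw [AssociatedPrimes.mem_iff, isAssociatedPrime_iff] at h1 h2
    obtain ⟨hp, x, hx⟩ := h1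
    obtain ⟨-, y, hy⟩ := h2
    rw [Submodule.bot_colon', aux_ann] at hx hy
    have pMem : p ∈ associatedPrimes R M :=
      isAssociatedPrime_iff.2 ⟨hp, x, by rw [Submodule.bot_colon']; exact hx⟩
    obtain ⟨H, hH, huniq⟩ := hbin p hp pMem
    have hx' := aux_simple hp hx
    have hy' := aux_simple hp hy
    have hXY : LinearMap.range (LinearMap.toSpanSingleton (Localization.AtPrime p)
          (LocalizedModule p.primeCompl M) (LocalizedModule.mk (x : M) 1))
        = LinearMap.range (LinearMap.toSpanSingleton (Localization.AtPrime p)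
          (LocalizedModule p.primeCompl M) (LocalizedModule.mk (y : M) 1)) := by
      rw [huniq _ hx', huniq _ hy']
    have hymem : (LocalizedModule.mk (y : M) 1 : LocalizedModule p.primeCompl M) ∈
        LinearMap.range (LinearMap.toSpanSingleton (Localization.AtPrime p)
          (LocalizedModule p.primeCompl M) (LocalizedModule.mk (x : M) 1)) := by
      rw [hXY]
      exact ⟨1, one_smul _ _⟩
    obtain ⟨c, hc⟩ := hymem
    rw [LinearMap.toSpanSingleton_apply] at hc
    obtain ⟨⟨a, s⟩, rfl⟩ : ∃ q : R × p.primeCompl, Localization.mk q.1 q.2 = c :=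
      Localization.induction_on c fun q => ⟨q, rfl⟩
    rw [LocalizedModule.mk_smul_mk, LocalizedModule.mk_eq] at hc
    obtain ⟨u, hu⟩ := hc
    simp only [one_smul, Submonoid.smul_def, smul_smul] at hu
    -- hu : ((u:R) * a) • (x:M) = ((u:R) * ((s*1 : p.primeCompl):R)) • (y:M)
    have htc : ((u : R) * ((s * 1 : p.primeCompl) : R)) ∉ p := (u * (s * 1)).2
    have hzN : ((u : R) * ((s * 1 : p.primeCompl) : R)) • (y : M) ∈ N := by
      rw [← hu]; exact N.smul_mem _ x.2
    have hzN' : ((u : R) * ((s * 1 : p.primeCompl) : R)) • (y : M) ∈ N' :=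
      N'.smul_mem _ y.2
    refine isAssociatedPrime_iff.2 ⟨hp, ⟨_, hzN, hzN'⟩, ?_⟩
    rw [Submodule.bot_colon', aux_ann]
    ext r
    rw [Submodule.mem_annihilator_span_singleton]
    constructor
    · intro hr
      have hr' : r ∈ (Submodule.span R {(y : M)}).annihilator := by rw [← hy]; exact hr
      have hry : r • (y : M) = 0 :=
        (Submodule.mem_annihilator_span_singleton _ r).1 hr'
      show r • (((u : R) * ((s * 1 : p.primeCompl) : R)) • (y : M)) = 0
      rw [smul_comm, hry, smul_zero]
    · intro hr
      have h0 : (r * ((u : R) * ((s * 1 : p.primeCompl) : R))) • (y : M) = 0 := by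
        rw [mul_smul]; exact hr
      have : r * ((u : R) * ((s * 1 : p.primeCompl) : R)) ∈ p := by
        have h1 := (Submodule.mem_annihilator_span_singleton _
          (r * ((u : R) * ((s * 1 : p.primeCompl) : R)))).2 h0
        rwa [← hy] at h1
      rcases hp.mem_or_mem this with h | h
      · exact h
      · exact absurd h htc
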